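/- Let S be a multiplicatively closed subset of R and Q a uniformly 2-absorbing primary ideal of R of order at most N with Q ∩ S = ∅. Then S⁻¹Q is a uniformly 2-absorbing primary ideal of S⁻¹R of order at most N. -/

import Mathlib

theorem stmt_13 {R : Type*} [CommRing R] (S : Submonoid R) (Q : Ideal R)
    (hQ : Q ≠ ⊤) (hdisj : Disjoint (Q : Set R) (S : Set R))
    (N : ℕ) (hN : 0 < N)
    (h : ∀ a b c : R, a * b * c ∈ Q → a * b ∉ Q → a * c ∉ Q.radical →
      (b * c) ^ N ∈ Q) :
    Q.map (algebraMap R (Localization S)) ≠ ⊤ ∧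
    ∀ a b c : Localization S,
      a * b * c ∈ Q.map (algebraMap R (Localization S)) →
      a * b ∉ Q.map (algebraMap R (Localization S)) →
      a * c ∉ (Q.map (algebraMap R (Localization S))).radical →
      (b * c) ^ N ∈ Q.map (algebraMap R (Localization S)) := by
  constructor
  · intro htop
    have h1 : (1 : Localization S) ∈ Q.map (algebraMap R (Localization S)) := by
      rw [htop]; exact Submodule.mem_top
    rw [show (1 : Localization S) = IsLocalization.mk' (Localization S) (1 : R) (1 : S) by
        rw [IsLocalization.mk'_one, map_one], IsLocalization.mk'_mem_map_algebraMap_iff S] at h1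
    obtain ⟨s, hs, hsq⟩ := h1
    rw [mul_one] at hsq
    exact Set.disjoint_left.mp hdisj hsq hs
  · intro a b c habc hab hac
    obtain ⟨xa, sa, rfl⟩ := IsLocalization.exists_mk'_eq S a
    obtain ⟨xb, sb, rfl⟩ := IsLocalization.exists_mk'_eq S b
    obtain ⟨xc, sc, rfl⟩ := IsLocalization.exists_mk'_eq S c
    rw [← IsLocalization.mk'_mul, ← IsLocalization.mk'_mul,
      IsLocalization.mk'_mem_map_algebraMap_iff S] at habc
    obtain ⟨u, hu, huq⟩ := habc
    have key := h (u * xa) xb xc (by convert huq using 1; ring)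
      (fun hub => hab (by
        rw [← IsLocalization.mk'_mul, IsLocalization.mk'_mem_map_algebraMap_iff S]
        exact ⟨u, hu, by rw [← mul_assoc]; exact hub⟩))
      (fun huc => hac (by
        refine Ideal.map_radical_le (f := algebraMap R (Localization S)) (I := Q) ?_
        rw [← IsLocalization.mk'_mul, IsLocalization.mk'_mem_map_algebraMap_iff S]
        exact ⟨u, hu, by rw [← mul_assoc]; exact huc⟩))
    rw [← IsLocalization.mk'_mul, ← IsLocalization.mk'_pow,
      IsLocalization.mk'_mem_map_algebraMap_iff S]
    exact ⟨1, S.one_mem, by simpa using key⟩
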